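/- For every natural number n ≥ 1, b_n({12̄, 1̄2}) = 2·Σ_{l=1}^{n} Σ ∏_{j=1}^{l} i_j!, where the inner sum runs over all compositions (i_1, i_2, …, i_l) of n into l positive parts (i.e. i_1 + i_2 + … + i_l = n with each i_j ≥ 1). -/

import Mathlib

/-- A signed permutation of length `n`: a permutation of `Fin n` (the absolute
values) together with a sign (bar) for each position. -/
abbrev SignedPerm (n : ℕ) := Equiv.Perm (Fin n) × (Fin n → Bool)

/-- `α` contains the signed pattern `τ`. -/
def SPContains {n k : ℕ} (α : SignedPerm n) (τ : SignedPerm k) : Prop :=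
  ∃ f : Fin k → Fin n, StrictMono f ∧
    (∀ p q : Fin k, τ.1 p < τ.1 q ↔ α.1 (f p) < α.1 (f q)) ∧
    ∀ j : Fin k, α.2 (f j) = τ.2 j

/-- `α` avoids every pattern in `T`. -/
def AvoidsAll {n k : ℕ} (T : Set (SignedPerm k)) (α : SignedPerm n) : Prop :=
  ∀ τ ∈ T, ¬ SPContains α τ

/-- `bn n T` is the number of signed permutations in `B_n` avoiding all patterns of `T`. -/
noncomputable def bn (n : ℕ) (T : Set (SignedPerm 2)) : ℕ :=
  Nat.card {α : SignedPerm n // AvoidsAll T α}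

def p12   : SignedPerm 2 := (Equiv.refl (Fin 2), ![false, false])
def p21   : SignedPerm 2 := (Equiv.swap 0 1,     ![false, false])
def p12b  : SignedPerm 2 := (Equiv.refl (Fin 2), ![false, true])
def p1b2  : SignedPerm 2 := (Equiv.refl (Fin 2), ![true, false])
def p21b  : SignedPerm 2 := (Equiv.swap 0 1,     ![false, true])
def p2b1  : SignedPerm 2 := (Equiv.swap 0 1,     ![true, false])
def p1b2b : SignedPerm 2 := (Equiv.refl (Fin 2), ![true, true])
def p2b1b : SignedPerm 2 := (Equiv.swap 0 1,     ![true, true])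

/-! ### Auxiliary lemmas about compositions -/

section CompositionAux

variable {n : ℕ} (c : Composition n)

theorem index_eq_iff' {j : Fin n} {i : Fin c.length} :
    c.index j = i ↔ c.sizeUpTo i ≤ j ∧ (j : ℕ) < c.sizeUpTo (i + 1) := by
  rw [eq_comm, ← c.mem_range_embedding_iff', c.mem_range_embedding_iff]

theorem index_monotone' : Monotone c.index := by
  intro i j hij
  by_contra h
  push_neg at h
  have h1 : c.sizeUpTo (c.index j + 1) ≤ c.sizeUpTo (c.index i) :=
    c.monotone_sizeUpTo (by exact_mod_cast h)
  have h2 := c.sizeUpTo_index_le i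
  have h3 := c.lt_sizeUpTo_index_succ j
  rw [Fin.val_succ] at h3
  have : (i : ℕ) ≤ (j : ℕ) := hij
  omega

theorem index_lt_index_imp_lt {i j : Fin n} (h : c.index i < c.index j) : i < j := by
  by_contra hc
  push_neg at hc
  exact absurd (index_monotone' c hc) (not_le.2 h)

theorem card_fiber_index (i : Fin c.length) :
    Nat.card {x : Fin n // c.index x = i} = c.blocksFun i := by
  have e1 : {x : Fin n // c.index x = i} ≃ {x : Fin n // x ∈ Set.range (c.embedding i)} :=
    Equiv.subtypeEquivRight (fun x => by rw [c.mem_range_embedding_iff']; exact eq_comm)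
  have e2 : Fin (c.blocksFun i) ≃ {x : Fin n // x ∈ Set.range (c.embedding i)} :=
    Equiv.ofInjective _ (c.embedding i).injective
  rw [Nat.card_congr (e1.trans e2.symm), Nat.card_eq_fintype_card, Fintype.card_fin]

end CompositionAux

/-! ### The `Good` predicate -/

def Good {n : ℕ} (α : SignedPerm n) : Prop :=
  ∀ i j : Fin n, i < j → α.2 i ≠ α.2 j → α.1 j < α.1 i

theorem contains_pair_iff {n : ℕ} (α : SignedPerm n) (s t : Bool) :
    SPContains α (Equiv.refl (Fin 2), ![s, t]) ↔
      ∃ i j : Fin n, i < j ∧ α.1 i < α.1 j ∧ α.2 i = s ∧ α.2 j = t := by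
  constructor
  · rintro ⟨f, hf, hord, hsgn⟩
    refine ⟨f 0, f 1, hf (by decide), ?_, ?_, ?_⟩
    · refine (hord 0 1).1 ?_
      simp only [Equiv.refl_apply]
      decide
    · simpa using hsgn 0
    · simpa using hsgn 1
  · rintro ⟨i, j, hij, hval, hsi, hsj⟩
    refine ⟨![i, j], ?_, ?_, ?_⟩
    · intro p q hpq
      fin_cases p <;> fin_cases q <;> simp_all
    · intro p q
      fin_cases p <;> fin_cases q <;>
        simp [hval, lt_asymm hval, lt_irrefl]
    · intro p; fin_cases p <;> simp [hsi, hsj]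

theorem avoids_iff_good {n : ℕ} (α : SignedPerm n) :
    AvoidsAll {p12b, p1b2} α ↔ Good α := by
  constructor
  · intro h i j hij hs
    rcases lt_trichotomy (α.1 j) (α.1 i) with h1 | h1 | h1
    · exact h1
    · exact absurd (α.1.injective h1) (fun e => hs (by rw [e]))
    · exfalso
      cases hsi : α.2 i <;> cases hsj : α.2 j <;> rw [hsi, hsj] at hs <;> try exact hs rfl
      · exact h p12b (Or.inl rfl) ((contains_pair_iff α false true).2 ⟨i, j, hij, h1, hsi, hsj⟩)
      · exact h p1b2 (Or.inr rfl) ((contains_pair_iff α true false).2 ⟨i, j, hij, h1, hsi, hsj⟩)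
  · intro h τ hτ hcon
    rcases hτ with rfl | rfl
    · rcases (contains_pair_iff α false true).1 hcon with ⟨i, j, hij, hval, hsi, hsj⟩
      exact absurd hval (not_lt.2 (le_of_lt (h i j hij (by rw [hsi, hsj]; decide))))
    · rcases (contains_pair_iff α true false).1 hcon with ⟨i, j, hij, hval, hsi, hsj⟩
      exact absurd hval (not_lt.2 (le_of_lt (h i j hij (by rw [hsi, hsj]; decide))))

/-! ### Alternating signs from a composition, and index-preserving permutations -/

def Dfun {n : ℕ} (b : Bool) (c : Composition n) : Fin n → Bool :=
  fun x => xor b (decide ((c.index x : ℕ) % 2 = 1))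

def IdxP {n : ℕ} (c : Composition n) (σ : Equiv.Perm (Fin n)) : Prop :=
  ∀ x, c.index (σ x) = c.index x

theorem dfun_ne_iff {n : ℕ} (b : Bool) (c : Composition n) (i j : Fin n) :
    Dfun b c i ≠ Dfun b c j ↔ (c.index i : ℕ) % 2 ≠ (c.index j : ℕ) % 2 := by
  cases b <;> simp [Dfun, ne_eq, decide_eq_decide] <;> omega

theorem idxp_good {n : ℕ} (b : Bool) (c : Composition n) (σ : Equiv.Perm (Fin n))
    (hσ : IdxP c σ) : Good (σ.trans Fin.revPerm, Dfun b c) := by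
  intro i j hij hs
  have h1 : c.index i ≠ c.index j := by
    intro h
    rw [dfun_ne_iff] at hs
    exact hs (by rw [h])
  have h2 : c.index i < c.index j := lt_of_le_of_ne (index_monotone' c hij.le) h1
  have h3 : c.index (σ i) < c.index (σ j) := by rw [hσ i, hσ j]; exact h2
  have h4 : σ i < σ j := index_lt_index_imp_lt c h3
  simpa [Equiv.trans_apply, Fin.rev_lt_rev] using h4

theorem good_key {n : ℕ} (b : Bool) (c : Composition n) (π : Equiv.Perm (Fin n))
    (h : Good (π, Dfun b c)) :
    ∀ i j : Fin n, c.index i < c.index j → (π.trans Fin.revPerm) i < (π.trans Fin.revPerm) j := by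
  intro i j hlt
  have hij : i < j := index_lt_index_imp_lt c hlt
  simp only [Equiv.trans_apply, Fin.revPerm_apply, Fin.rev_lt_rev]
  by_cases hp : (c.index i : ℕ) % 2 = (c.index j : ℕ) % 2
  · -- insert an element of the next block
    have hlen : (c.index i : ℕ) + 1 < c.length :=
      lt_of_le_of_lt (by exact_mod_cast hlt) (c.index j).2
    have hkn : c.sizeUpTo ((c.index i : ℕ) + 1) < n := by
      calc c.sizeUpTo ((c.index i : ℕ) + 1) ≤ c.sizeUpTo (c.index j) :=
            c.monotone_sizeUpTo (by exact_mod_cast hlt)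
        _ ≤ (j : ℕ) := c.sizeUpTo_index_le j
        _ < n := j.2
    set k : Fin n := ⟨c.sizeUpTo ((c.index i : ℕ) + 1), hkn⟩ with hk
    have hidxk : c.index k = ⟨(c.index i : ℕ) + 1, hlen⟩ := by
      rw [index_eq_iff']
      exact ⟨le_refl _, c.sizeUpTo_strict_mono hlen⟩
    have hj2 : (c.index i : ℕ) + 2 ≤ (c.index j : ℕ) := by
      have : (c.index i : ℕ) < (c.index j : ℕ) := hlt
      omega
    have hik : i < k := by
      have := c.lt_sizeUpTo_index_succ i
      rw [Fin.val_succ] at this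
      exact this
    have hkj : k < j := by
      have h5 : c.sizeUpTo ((c.index i : ℕ) + 1 + 1) ≤ c.sizeUpTo (c.index j) := by
        refine c.monotone_sizeUpTo ?_
        omega
      have h6 := c.sizeUpTo_index_le j
      have h7 := c.sizeUpTo_strict_mono (show (c.index i : ℕ) + 1 < c.length from hlen)
      show c.sizeUpTo ((c.index i : ℕ) + 1) < (j : ℕ)
      omega
    have hval : ((⟨(c.index i : ℕ) + 1, hlen⟩ : Fin c.length) : ℕ) = (c.index i : ℕ) + 1 := rfl
    have hd1 : Dfun b c i ≠ Dfun b c k := by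
      rw [dfun_ne_iff, hidxk, hval]; omega
    have hd2 : Dfun b c k ≠ Dfun b c j := by
      rw [dfun_ne_iff, hidxk, hval]; omega
    exact lt_trans (h k j hkj hd2) (h i k hik hd1)
  · exact h i j hij ((dfun_ne_iff b c i j).2 hp)

theorem good_idxp {n : ℕ} (b : Bool) (c : Composition n) (π : Equiv.Perm (Fin n))
    (h : Good (π, Dfun b c)) : IdxP c (π.trans Fin.revPerm) := by
  set σ := π.trans Fin.revPerm with hσdef
  have key := good_key b c π h
  have upper : ∀ x : Fin n, (σ x : ℕ) < c.sizeUpTo ((c.index x : ℕ) + 1) := by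
    intro x
    by_contra hx
    push_neg at hx
    set t := c.sizeUpTo ((c.index x : ℕ) + 1) with ht
    set S : Finset (Fin n) := Finset.univ.filter (fun y => c.index y ≤ c.index x) with hS
    have hST : S = Finset.univ.filter (fun y : Fin n => (y : ℕ) < t) := by
      ext y
      simp only [hS, Finset.mem_filter, Finset.mem_univ, true_and]
      constructor
      · intro hy
        calc (y : ℕ) < c.sizeUpTo ((c.index y : ℕ) + 1) := by
              have := c.lt_sizeUpTo_index_succ y; rwa [Fin.val_succ] at this
          _ ≤ t := c.monotone_sizeUpTo (by exact_mod_cast Nat.succ_le_succ hy)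
      · intro hy
        by_contra hc
        push_neg at hc
        have : t ≤ c.sizeUpTo (c.index y) := c.monotone_sizeUpTo (by exact_mod_cast hc)
        have := c.sizeUpTo_index_le y
        omega
    have hsub : Finset.univ.filter (fun y : Fin n => (y : ℕ) < t) ⊆ S.image σ := by
      intro w hw
      simp only [Finset.mem_filter, Finset.mem_univ, true_and] at hw
      obtain ⟨z, hz⟩ := σ.surjective w
      refine Finset.mem_image.2 ⟨z, ?_, hz⟩
      simp only [hS, Finset.mem_filter, Finset.mem_univ, true_and]
      by_contra hcz
      push_neg at hcz
      have := key x z hcz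
      rw [← hσdef] at this
      rw [hz] at this
      have : (σ x : ℕ) < (w : ℕ) := this
      omega
    have hmem : σ x ∈ S.image σ :=
      Finset.mem_image.2 ⟨x, by simp [hS], rfl⟩
    have hnot : σ x ∉ Finset.univ.filter (fun y : Fin n => (y : ℕ) < t) := by
      simp only [Finset.mem_filter, Finset.mem_univ, true_and]
      omega
    have hins : insert (σ x) (Finset.univ.filter (fun y : Fin n => (y : ℕ) < t)) ⊆ S.image σ :=
      Finset.insert_subset hmem hsub
    have hcard := Finset.card_le_card hins
    rw [Finset.card_insert_of_notMem hnot, Finset.card_image_of_injective _ σ.injective,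
      ← hST] at hcard
    omega
  have lower : ∀ x : Fin n, c.sizeUpTo (c.index x) ≤ (σ x : ℕ) := by
    intro x
    by_contra hx
    push_neg at hx
    set t := c.sizeUpTo (c.index x) with ht
    set S : Finset (Fin n) := Finset.univ.filter (fun y => c.index x ≤ c.index y) with hS
    have hST : S = Finset.univ.filter (fun y : Fin n => t ≤ (y : ℕ)) := by
      ext y
      simp only [hS, Finset.mem_filter, Finset.mem_univ, true_and]
      constructor
      · intro hy
        calc t ≤ c.sizeUpTo (c.index y) := c.monotone_sizeUpTo (by exact_mod_cast hy)
          _ ≤ (y : ℕ) := c.sizeUpTo_index_le y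
      · intro hy
        by_contra hc
        push_neg at hc
        have h1 : c.sizeUpTo ((c.index y : ℕ) + 1) ≤ t :=
          c.monotone_sizeUpTo (Nat.succ_le_of_lt (by exact_mod_cast hc))
        have h2 := c.lt_sizeUpTo_index_succ y
        rw [Fin.val_succ] at h2
        omega
    have hsub : Finset.univ.filter (fun y : Fin n => t ≤ (y : ℕ)) ⊆ S.image σ := by
      intro w hw
      simp only [Finset.mem_filter, Finset.mem_univ, true_and] at hw
      obtain ⟨z, hz⟩ := σ.surjective w
      refine Finset.mem_image.2 ⟨z, ?_, hz⟩
      simp only [hS, Finset.mem_filter, Finset.mem_univ, true_and]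
      by_contra hcz
      push_neg at hcz
      have := key z x hcz
      rw [← hσdef, hz] at this
      have : (w : ℕ) < (σ x : ℕ) := this
      omega
    have hmem : σ x ∈ S.image σ :=
      Finset.mem_image.2 ⟨x, by simp [hS], rfl⟩
    have hnot : σ x ∉ Finset.univ.filter (fun y : Fin n => t ≤ (y : ℕ)) := by
      simp only [Finset.mem_filter, Finset.mem_univ, true_and]
      omega
    have hins : insert (σ x) (Finset.univ.filter (fun y : Fin n => t ≤ (y : ℕ))) ⊆ S.image σ :=
      Finset.insert_subset hmem hsub
    have hcard := Finset.card_le_card hins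
    rw [Finset.card_insert_of_notMem hnot, Finset.card_image_of_injective _ σ.injective,
      ← hST] at hcard
    omega
  intro x
  rw [index_eq_iff']
  exact ⟨lower x, upper x⟩

/-! ### Injectivity and bijectivity of the sign encoding -/

section DfunAux

variable {n : ℕ} (c : Composition n)

theorem index_zero_val (hn : 0 < n) : (c.index ⟨0, hn⟩ : ℕ) = 0 := by
  have hl : 0 < c.length := c.length_pos_of_pos hn
  have : c.index ⟨0, hn⟩ = ⟨0, hl⟩ := by
    rw [index_eq_iff']
    refine ⟨by simp [c.sizeUpTo_zero], ?_⟩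
    have := c.sizeUpTo_strict_mono hl
    simpa [c.sizeUpTo_zero] using this
  rw [this]

theorem index_succ_le {k : ℕ} (hk1 : k + 1 < n) (hk : k < n) :
    (c.index ⟨k + 1, hk1⟩ : ℕ) ≤ (c.index ⟨k, hk⟩ : ℕ) + 1 := by
  by_contra hcon
  push_neg at hcon
  have hB : (c.index ⟨k + 1, hk1⟩ : ℕ) < c.length := (c.index ⟨k + 1, hk1⟩).2
  have h1 : c.sizeUpTo ((c.index ⟨k, hk⟩ : ℕ) + 1 + 1) ≤ c.sizeUpTo (c.index ⟨k + 1, hk1⟩) :=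
    c.monotone_sizeUpTo (by omega)
  have h2 := c.sizeUpTo_index_le (⟨k + 1, hk1⟩ : Fin n)
  have h3 := c.lt_sizeUpTo_index_succ (⟨k, hk⟩ : Fin n)
  rw [Fin.val_succ] at h3
  have h4 : c.sizeUpTo ((c.index ⟨k, hk⟩ : ℕ) + 1) < c.sizeUpTo ((c.index ⟨k, hk⟩ : ℕ) + 1 + 1) :=
    c.sizeUpTo_strict_mono (by omega)
  simp only [Fin.val_mk] at h2 h3
  omega

theorem index_succ_flip (b : Bool) {k : ℕ} (hk1 : k + 1 < n) (hk : k < n) :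
    (c.index ⟨k + 1, hk1⟩ : ℕ) =
      (c.index ⟨k, hk⟩ : ℕ) +
        (if Dfun b c ⟨k, hk⟩ ≠ Dfun b c ⟨k + 1, hk1⟩ then 1 else 0) := by
  have h1 := index_succ_le c hk1 hk
  have h2 : (c.index ⟨k, hk⟩ : ℕ) ≤ (c.index ⟨k + 1, hk1⟩ : ℕ) :=
    index_monotone' c (by simp [Fin.le_def])
  by_cases hf : Dfun b c ⟨k, hk⟩ ≠ Dfun b c ⟨k + 1, hk1⟩
  · rw [if_pos hf]
    rw [dfun_ne_iff] at hf
    omega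
  · rw [if_neg hf]
    push_neg at hf
    have : (c.index ⟨k, hk⟩ : ℕ) % 2 = (c.index ⟨k + 1, hk1⟩ : ℕ) % 2 := by
      by_contra hp
      exact absurd ((dfun_ne_iff b c _ _).2 (fun h => hp h)) (by simpa using hf)
    omega

theorem index_last_val (hn : 0 < n) :
    (c.index ⟨n - 1, by omega⟩ : ℕ) = c.length - 1 := by
  have hl : 0 < c.length := c.length_pos_of_pos hn
  have hlt : c.length - 1 < c.length := by omega
  have : c.index ⟨n - 1, by omega⟩ = ⟨c.length - 1, hlt⟩ := by
    rw [index_eq_iff']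
    have e1 : c.length - 1 + 1 = c.length := by omega
    constructor
    · have h1 : c.sizeUpTo (c.length - 1) < c.sizeUpTo (c.length - 1 + 1) :=
        c.sizeUpTo_strict_mono hlt
      rw [e1, c.sizeUpTo_length] at h1
      show c.sizeUpTo (c.length - 1) ≤ n - 1
      omega
    · show (n - 1 : ℕ) < c.sizeUpTo (c.length - 1 + 1)
      rw [e1, c.sizeUpTo_length]
      omega
  rw [this]

end DfunAux

theorem dfun_injective {n : ℕ} (hn : 0 < n) :
    Function.Injective (fun p : Bool × Composition n => Dfun p.1 p.2) := by
  rintro ⟨b, c⟩ ⟨b', c'⟩ h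
  simp only at h
  have hb : b = b' := by
    have := congrFun h ⟨0, hn⟩
    simp only [Dfun, index_zero_val] at this
    simpa using this
  subst hb
  have hidx : ∀ k (hk : k < n), (c.index ⟨k, hk⟩ : ℕ) = (c'.index ⟨k, hk⟩ : ℕ) := by
    intro k
    induction k with
    | zero => intro hk; rw [index_zero_val c hk, index_zero_val c' hk]
    | succ k ih =>
      intro hk
      have hk' : k < n := by omega
      rw [index_succ_flip c b hk hk', index_succ_flip c' b hk hk', ih hk', h]
  have hlen : c.length = c'.length := by
    have h1 := index_last_val c hn
    have h2 := index_last_val c' hn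
    have h3 := hidx (n - 1) (by omega)
    have l1 : 0 < c.length := c.length_pos_of_pos hn
    have l2 : 0 < c'.length := c'.length_pos_of_pos hn
    omega
  have hfib : ∀ m, Nat.card {x : Fin n // (c.index x : ℕ) = m} =
      Nat.card {x : Fin n // (c'.index x : ℕ) = m} := by
    intro m
    apply Nat.card_congr
    exact Equiv.subtypeEquivRight (fun x => by rw [hidx x.1 x.2])
  have hbf : ∀ (i : Fin c.length) (i' : Fin c'.length), (i : ℕ) = (i' : ℕ) →
      c.blocksFun i = c'.blocksFun i' := by
    intro i i' hii
    rw [← card_fiber_index c i, ← card_fiber_index c' i']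
    have e : ∀ (d : Composition n) (j : Fin d.length),
        Nat.card {x : Fin n // d.index x = j} =
          Nat.card {x : Fin n // (d.index x : ℕ) = (j : ℕ)} := by
      intro d j
      exact Nat.card_congr (Equiv.subtypeEquivRight (fun x => by rw [Fin.ext_iff]))
    rw [e, e, hii, hfib]
  have hblocks : c.blocks = c'.blocks := by
    apply List.ext_getElem (by rw [c.blocks_length, c'.blocks_length, hlen])
    intro m h1 h2
    have := hbf ⟨m, by rwa [c.blocks_length] at h1⟩ ⟨m, by rwa [c'.blocks_length] at h2⟩ rfl
    simpa [Composition.blocksFun, List.get_eq_getElem] using this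
  have : c = c' := by
    ext1
    rw [hblocks]
  rw [this]

theorem dfun_bijective {n : ℕ} (hn : 0 < n) :
    Function.Bijective (fun p : Bool × Composition n => Dfun p.1 p.2) := by
  rw [Fintype.bijective_iff_injective_and_card]
  refine ⟨dfun_injective hn, ?_⟩
  rw [Fintype.card_prod, Fintype.card_bool, composition_card, Fintype.card_fun,
    Fintype.card_bool, Fintype.card_fin]
  rw [← pow_succ']
  congr 1
  omega

/-! ### Counting index-preserving permutations -/

def permPiEquiv {n : ℕ} (c : Composition n) :
    {σ : Equiv.Perm (Fin n) // IdxP c σ} ≃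
      (∀ i : Fin c.length, Equiv.Perm {x : Fin n // c.index x = i}) where
  toFun σ i := σ.1.subtypePerm (fun x => by
    constructor
    · intro hx; rw [← σ.2 x]; exact hx
    · intro hx; rw [σ.2 x]; exact hx)
  invFun g :=
    ⟨(Equiv.sigmaFiberEquiv c.index).symm.trans
        ((Equiv.sigmaCongrRight g).trans (Equiv.sigmaFiberEquiv c.index)),
      fun x => (g (c.index x) ⟨x, rfl⟩).2⟩
  left_inv σ := by
    apply Subtype.ext
    apply Equiv.ext
    intro x
    rfl
  right_inv g := by
    funext i
    apply Equiv.ext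
    rintro ⟨x, hx⟩
    apply Subtype.ext
    subst hx
    rfl

theorem card_idxp {n : ℕ} (c : Composition n) :
    Nat.card {σ : Equiv.Perm (Fin n) // IdxP c σ} = (c.blocks.map Nat.factorial).prod := by
  rw [Nat.card_congr (permPiEquiv c), Nat.card_pi]
  have hfib : ∀ i : Fin c.length,
      Nat.card (Equiv.Perm {x : Fin n // c.index x = i}) = (c.blocksFun i).factorial := by
    intro i
    rw [Nat.card_eq_fintype_card, Fintype.card_perm, ← card_fiber_index c i,
      Nat.card_eq_fintype_card]
  rw [Finset.prod_congr rfl (fun i _ => hfib i), ← c.ofFn_blocksFun, List.map_ofFn,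
    List.prod_ofFn]
  rfl

theorem nat_card_sigma' {ι : Type*} [Fintype ι] (f : ι → Type*) [∀ i, Finite (f i)] :
    Nat.card ((i : ι) × f i) = ∑ i, Nat.card (f i) := by
  classical
  letI : ∀ i, Fintype (f i) := fun i => Fintype.ofFinite _
  rw [Nat.card_eq_fintype_card, Fintype.card_sigma]
  exact Finset.sum_congr rfl (fun i _ => (Nat.card_eq_fintype_card).symm)

/-- b_n({12̄,1̄2}) = 2·Σ_{l=1}^n Σ_{i_1+⋯+i_l=n, i_j ≥ 1} ∏_j i_j!. -/
theorem stmt3 (n : ℕ) (hn : 1 ≤ n) :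
    bn n {p12b, p1b2} =
      2 * ∑ l ∈ Finset.Icc 1 n,
            ∑ c ∈ Finset.univ.filter (fun c : Composition n => c.length = l),
              (c.blocks.map Nat.factorial).prod := by
  classical
  -- simplify the right-hand side to a sum over all compositions
  have hRHS : (∑ l ∈ Finset.Icc 1 n,
      ∑ c ∈ Finset.univ.filter (fun c : Composition n => c.length = l),
        (c.blocks.map Nat.factorial).prod)
      = ∑ c : Composition n, (c.blocks.map Nat.factorial).prod := by
    refine Finset.sum_fiberwise_of_maps_to ?_ _
    intro c _
    rw [Finset.mem_Icc]
    exact ⟨c.length_pos_of_pos hn, c.length_le⟩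
  rw [hRHS]
  -- the left-hand side
  rw [bn, Nat.card_congr (Equiv.subtypeEquivRight (fun α => avoids_iff_good α))]
  -- the bijection
  set Φ : ((p : Bool × Composition n) × {σ : Equiv.Perm (Fin n) // IdxP p.2 σ}) →
      {α : SignedPerm n // Good α} :=
    fun x => ⟨(x.2.1.trans Fin.revPerm, Dfun x.1.1 x.1.2), idxp_good x.1.1 x.1.2 x.2.1 x.2.2⟩
    with hΦ
  have hbij : Function.Bijective Φ := by
    constructor
    · rintro ⟨⟨b, c⟩, σ, hσ⟩ ⟨⟨b', c'⟩, σ', hσ'⟩ heq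
      simp only [hΦ, Subtype.mk_eq_mk, Prod.mk.injEq] at heq
      obtain ⟨h1, h2⟩ := heq
      have hbc : (b, c) = (b', c') := dfun_injective hn h2
      have hσσ : σ = σ' := by
        have : (σ.trans Fin.revPerm).trans Fin.revPerm = (σ'.trans Fin.revPerm).trans Fin.revPerm := by
          rw [h1]
        apply Equiv.ext
        intro x
        have := congrArg (fun e => e x) this
        simpa [Equiv.trans_apply, Fin.rev_rev] using this
      cases hbc
      exact Sigma.ext rfl (heq_of_eq (Subtype.ext hσσ))
    · rintro ⟨⟨π, ε⟩, hG⟩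
      obtain ⟨⟨b, c⟩, hbc⟩ := (dfun_bijective hn).surjective ε
      simp only at hbc
      have hG' : Good (π, Dfun b c) := by rw [hbc]; exact hG
      refine ⟨⟨(b, c), π.trans Fin.revPerm, good_idxp b c π hG'⟩, ?_⟩
      apply Subtype.ext
      show ((π.trans Fin.revPerm).trans Fin.revPerm, Dfun b c) = (π, ε)
      have hππ : (π.trans Fin.revPerm).trans Fin.revPerm = π := by
        apply Equiv.ext
        intro x
        simp [Equiv.trans_apply, Fin.rev_rev]
      rw [hππ, hbc]
  rw [← Nat.card_eq_of_bijective Φ hbij, nat_card_sigma']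
  rw [Fintype.sum_prod_type]
  simp only [card_idxp]
  rw [Finset.sum_const, Finset.card_univ, Fintype.card_bool, smul_eq_mul]
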